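/- Let D be a division ring with center F = Z(D), let N be a normal subgroup of D*, and suppose there exists a positive integer d such that for every x ∈ N there is a positive integer n_x ≤ d with x^{n_x} ∈ F. Then for every a ∈ N, every nonzero r ∈ D, and all r_1, …, r_d ∈ D, one has g_d(a r a^{-1} r^{-1}, r_1, …, r_d) = 0. -/

import Mathlib

/-- The generalized polynomial
`g_n(x, y₁, …, yₙ) = ∑_{δ ∈ S_{n+1}} sign(δ) · x^{δ(0)} y₁ x^{δ(1)} ⋯ yₙ x^{δ(n)}`
evaluated at `x = a`, `yᵢ = r i` in a division ring. -/
def gExpr {D : Type*} [DivisionRing D] (n : ℕ) (a : D) (r : Fin n → D) : D :=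
  ∑ δ : Equiv.Perm (Fin (n + 1)),
    ((Equiv.Perm.sign δ : ℤ) : D) *
      (a ^ ((δ 0 : Fin (n + 1)) : ℕ) *
        ((List.finRange n).map fun i => r i * a ^ ((δ i.succ : Fin (n + 1)) : ℕ)).prod)

/-- The building block of `gExpr`: `e 0 * (r 1 * e 1) * ⋯ * (r m * e m)`. -/
def Pfun {D : Type*} [DivisionRing D] (m : ℕ) (rs : Fin m → D) (e : Fin (m + 1) → D) : D :=
  e 0 * ((List.finRange m).map fun i => rs i * e i.succ).prod

/-- Pulling a "central" scalar out of one entry of a list product. -/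
lemma list_pull {D : Type*} [DivisionRing D] {α : D} (hα : ∀ y : D, α * y = y * α)
    {ι : Type*} [DecidableEq ι] (f : ι → D) (j : ι) :
    ∀ l : List ι, l.Nodup → j ∈ l →
      (l.map (Function.update f j (α * f j))).prod = α * (l.map f).prod := by
  intro l
  induction l with
  | nil => simp
  | cons a t ih =>
    intro hnd hmem
    have hat : a ∉ t := (List.nodup_cons.mp hnd).1
    rcases List.mem_cons.mp hmem with rfl | hj
    · have ht : t.map (Function.update f j (α * f j)) = t.map f := by
        apply List.map_congr_left; intro x hx
        refine Function.update_of_ne (fun hxy => hat ?_) _ _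
        subst hxy; exact hx
      rw [List.map_cons, List.prod_cons, ht, Function.update_self,
        List.map_cons, List.prod_cons, mul_assoc]
    · have haj : a ≠ j := fun h => hat (h ▸ hj)
      have h1 : Function.update f j (α * f j) a = f a := Function.update_of_ne haj _ _
      rw [List.map_cons, List.prod_cons, h1, ih (List.nodup_cons.mp hnd).2 hj,
        List.map_cons, List.prod_cons, ← mul_assoc, ← hα (f a), mul_assoc]

/-- Pulling a central scalar out of one slot of `Pfun`. -/
lemma Pfun_update {D : Type*} [DivisionRing D] (m : ℕ) (rs : Fin m → D)
    (e : Fin (m + 1) → D) {α : D} (hα : ∀ y : D, α * y = y * α) (p : Fin (m + 1)) :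
    Pfun m rs (Function.update e p (α * e p)) = α * Pfun m rs e := by
  unfold Pfun
  induction p using Fin.cases with
  | zero =>
    have hl : ((List.finRange m).map fun i =>
        rs i * Function.update e 0 (α * e 0) i.succ) =
        (List.finRange m).map fun i => rs i * e i.succ := by
      apply List.map_congr_left; intro i _
      rw [Function.update_of_ne (Fin.succ_ne_zero i)]
    rw [hl, Function.update_self, mul_assoc]
  | succ q =>
    have h0 : Function.update e q.succ (α * e q.succ) 0 = e 0 :=
      Function.update_of_ne (Fin.succ_ne_zero q).symm _ _
    set g : Fin m → D := fun i => rs i * e i.succ with hg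
    have hfun : (fun i => rs i * Function.update e q.succ (α * e q.succ) i.succ) =
        Function.update g q (α * g q) := by
      funext i
      by_cases hiq : i = q
      · subst hiq
        rw [Function.update_self, Function.update_self, hg, ← mul_assoc, ← hα (rs i), mul_assoc]
      · rw [Function.update_of_ne (fun h => hiq (Fin.succ_injective m h)),
          Function.update_of_ne hiq]
    rw [h0, hfun, list_pull hα g q (List.finRange m) (List.nodup_finRange m)
      (List.mem_finRange q), ← mul_assoc, ← hα (e 0), mul_assoc]

/-- Let `D` be a division ring with center `F`, `N` a normal subgroup of `Dˣ`, and suppose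
there is a positive integer `d` such that every `x ∈ N` satisfies `x ^ n ∈ F` for some
positive `n ≤ d`. Then `g_d(a r a⁻¹ r⁻¹, r₁, …, r_d) = 0` for every `a ∈ N`, every
nonzero `r ∈ D`, and all `r₁, …, r_d ∈ D`. -/
theorem gExpr_commutator_eq_zero_of_radical_bounded
    (D : Type*) [DivisionRing D] (N : Subgroup Dˣ) (hN : N.Normal)
    (d : ℕ) (hd : 0 < d)
    (h : ∀ x ∈ N, ∃ n : ℕ, 0 < n ∧ n ≤ d ∧ ((x : Dˣ) : D) ^ n ∈ Subring.center D) :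
    ∀ a ∈ N, ∀ r : D, r ≠ 0 → ∀ rs : Fin d → D,
      gExpr d (((a : Dˣ) : D) * r * ((a : Dˣ) : D)⁻¹ * r⁻¹) rs = 0 := by
  intro a ha r hr rs
  set v : Dˣ := Units.mk0 r hr with hv
  have hu : a * v * a⁻¹ * v⁻¹ ∈ N := by
    have h1 : v * a⁻¹ * v⁻¹ ∈ N := hN.conj_mem _ (inv_mem ha) v
    have h2 : a * (v * a⁻¹ * v⁻¹) ∈ N := mul_mem ha h1
    simpa [mul_assoc] using h2
  obtain ⟨n, hn0, hnd, hcen⟩ := h _ hu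
  set c : D := ((a : Dˣ) : D) * r * ((a : Dˣ) : D)⁻¹ * r⁻¹ with hc
  have hcu : c = ((a * v * a⁻¹ * v⁻¹ : Dˣ) : D) := by
    simp [hc, hv, Units.val_mul, Units.val_inv_eq_inv_val]
  set α : D := c ^ n with hαdef
  have hα : ∀ y : D, α * y = y * α := by
    intro y
    have := hcen
    rw [← hcu] at this
    exact ((Subring.mem_center_iff.mp this) y).symm
  -- set up the pairing
  set nfin : Fin (d + 1) := ⟨n, by omega⟩ with hnfin
  have h0n : (0 : Fin (d + 1)) ≠ nfin := by
    intro hh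
    exact hn0.ne (by simpa using congrArg Fin.val hh)
  set τ : Equiv.Perm (Fin (d + 1)) := Equiv.swap 0 nfin with hτ
  set z : Fin (d + 1) → D := fun j => c ^ (j : ℕ) with hz
  set e₀ : Fin (d + 1) → D := fun j => if (j : ℕ) = n then 1 else c ^ (j : ℕ) with he₀
  have hgE : gExpr d c rs = ∑ δ : Equiv.Perm (Fin (d + 1)),
      ((Equiv.Perm.sign δ : ℤ) : D) * Pfun d rs (z ∘ δ) := rfl
  rw [hgE]
  apply Finset.sum_ninvolution (fun δ => τ * δ)
  · intro δ
    -- key: Pfun (z ∘ δ) = Pfun (z ∘ (τ * δ))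
    have he0n : e₀ nfin = 1 := by simp [he₀, hnfin]
    have he00 : e₀ 0 = 1 := by
      show (if ((0 : Fin (d + 1)) : ℕ) = n then (1 : D) else c ^ ((0 : Fin (d + 1)) : ℕ)) = 1
      rw [Fin.val_zero, if_neg hn0.ne, pow_zero]
    have key1 : z ∘ δ = Function.update (e₀ ∘ δ) (δ⁻¹ nfin)
        (α * (e₀ ∘ δ) (δ⁻¹ nfin)) := by
      funext p
      by_cases hp : δ p = nfin
      · have hp' : p = δ⁻¹ nfin := by rw [← hp]; simp
        rw [hp', Function.update_self]
        simp only [Function.comp_apply, Equiv.Perm.coe_inv, Equiv.apply_symm_apply, he0n, mul_one]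
        rfl
      · have hp' : p ≠ δ⁻¹ nfin := fun hh => hp (by rw [hh]; simp)
        rw [Function.update_of_ne hp']
        simp only [hz, he₀, Function.comp_apply]
        rw [if_neg (fun hh => hp (by simp [hnfin, Fin.ext_iff, hh]))]
    have key2 : z ∘ ⇑(τ * δ) = Function.update (e₀ ∘ δ) (δ⁻¹ 0)
        (α * (e₀ ∘ δ) (δ⁻¹ 0)) := by
      funext p
      have hτδ : (z ∘ ⇑(τ * δ)) p = z (τ (δ p)) := rfl
      by_cases hp0 : δ p = 0
      · have hp' : p = δ⁻¹ 0 := by rw [← hp0]; simp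
        rw [hτδ, hp0, hp', Function.update_self]
        simp only [Function.comp_apply, Equiv.Perm.coe_inv, Equiv.apply_symm_apply, he00, mul_one]
        simp [hτ, hz, Equiv.swap_apply_left, hαdef, hnfin]
      · by_cases hpn : δ p = nfin
        · have hp' : p ≠ δ⁻¹ 0 := fun hh => hp0 (by rw [hh]; simp)
          rw [hτδ, hpn, Function.update_of_ne hp']
          simp only [Function.comp_apply, hpn, he0n]
          simp [hτ, hz, Equiv.swap_apply_right]
        · have hp' : p ≠ δ⁻¹ 0 := fun hh => hp0 (by rw [hh]; simp)
          rw [hτδ, Function.update_of_ne hp']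
          rw [hτ, Equiv.swap_apply_of_ne_of_ne hp0 hpn]
          simp only [hz, he₀, Function.comp_apply]
          rw [if_neg (fun hh => hpn (by simp [hnfin, Fin.ext_iff, hh]))]
    have hP : Pfun d rs (z ∘ ⇑δ) = Pfun d rs (z ∘ ⇑(τ * δ)) := by
      rw [key1, key2, Pfun_update d rs _ hα, Pfun_update d rs _ hα]
    have hsign : ((Equiv.Perm.sign (τ * δ) : ℤ) : D) =
        -((Equiv.Perm.sign δ : ℤ) : D) := by
      rw [map_mul]
      rw [hτ, Equiv.Perm.sign_swap h0n]
      push_cast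
      rw [neg_one_mul]
    rw [hsign, ← hP, neg_mul]
    exact add_neg_cancel _
  · intro δ _
    intro hcontra
    have : (τ * δ) (δ⁻¹ 0) = δ (δ⁻¹ 0) := by rw [hcontra]
    simp only [Equiv.Perm.mul_apply, Equiv.Perm.coe_inv, Equiv.apply_symm_apply] at this
    rw [hτ, Equiv.swap_apply_left] at this
    exact h0n this.symm
  · intro δ; exact Finset.mem_univ _
  · intro δ
    rw [← mul_assoc, hτ, Equiv.swap_mul_self, one_mul]
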